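/- Every formula F has exactly one →-normal form F' (i.e., F →* F' and F' admits no →-step, and such F' is unique), and this normal form F' contains no occurrence of a quantifier. -/

import Mathlib

mutual
  /-- Terms of first-order logic extended with Hilbert's ε-operator,
  in de Bruijn representation (so formulas are automatically identified up
  to renaming of bound variables). -/
  inductive Tm : Type
    | var : ℕ → Tm
    | fn : ℕ → (k : ℕ) → (Fin k → Tm) → Tm
    | eps : Fm → Tm
  /-- Formulas; `ex F`, `all F` and `Tm.eps F` bind de Bruijn index 0 of `F`. -/
  inductive Fm : Type
    | pred : ℕ → (k : ℕ) → (Fin k → Tm) → Fm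
    | not : Fm → Fm
    | or : Fm → Fm → Fm
    | and : Fm → Fm → Fm
    | imp : Fm → Fm → Fm
    | ex : Fm → Fm
    | all : Fm → Fm
end

/-- Lifting a renaming under a binder. -/
def upRen (r : ℕ → ℕ) : ℕ → ℕ
  | 0 => 0
  | n + 1 => r n + 1

mutual
  /-- Renaming of free variables in a term. -/
  def renT (r : ℕ → ℕ) : Tm → Tm
    | .var i => .var (r i)
    | .fn f k a => .fn f k (fun i => renT r (a i))
    | .eps F => .eps (renF (upRen r) F)
  /-- Renaming of free variables in a formula. -/
  def renF (r : ℕ → ℕ) : Fm → Fm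
    | .pred p k a => .pred p k (fun i => renT r (a i))
    | .not F => .not (renF r F)
    | .or F G => .or (renF r F) (renF r G)
    | .and F G => .and (renF r F) (renF r G)
    | .imp F G => .imp (renF r F) (renF r G)
    | .ex F => .ex (renF (upRen r) F)
    | .all F => .all (renF (upRen r) F)
end

/-- Lifting a substitution under a binder. -/
def upSub (σ : ℕ → Tm) : ℕ → Tm
  | 0 => .var 0
  | n + 1 => renT Nat.succ (σ n)

mutual
  /-- Capture-avoiding simultaneous substitution on terms. -/
  def subT (σ : ℕ → Tm) : Tm → Tm
    | .var i => σ i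
    | .fn f k a => .fn f k (fun i => subT σ (a i))
    | .eps F => .eps (subF (upSub σ) F)
  /-- Capture-avoiding simultaneous substitution on formulas. -/
  def subF (σ : ℕ → Tm) : Fm → Fm
    | .pred p k a => .pred p k (fun i => subT σ (a i))
    | .not F => .not (subF σ F)
    | .or F G => .or (subF σ F) (subF σ G)
    | .and F G => .and (subF σ F) (subF σ G)
    | .imp F G => .imp (subF σ F) (subF σ G)
    | .ex F => .ex (subF (upSub σ) F)
    | .all F => .all (subF (upSub σ) F)
end

/-- `inst1 F t` is `F{x ↦ t}` for the variable `x` bound just outside `F`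
(de Bruijn index 0). -/
def inst1 (F : Fm) (t : Tm) : Fm :=
  subF (fun n => match n with | 0 => t | n + 1 => .var n) F

mutual
  /-- The variable with de Bruijn index `n` occurs free in the term. -/
  def freeT (n : ℕ) : Tm → Prop
    | .var i => i = n
    | .fn _ _ a => ∃ i, freeT n (a i)
    | .eps F => freeF (n + 1) F
  /-- The variable with de Bruijn index `n` occurs free in the formula. -/
  def freeF (n : ℕ) : Fm → Prop
    | .pred _ _ a => ∃ i, freeT n (a i)
    | .not F => freeF n F
    | .or F G => freeF n F ∨ freeF n G
    | .and F G => freeF n F ∨ freeF n G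
    | .imp F G => freeF n F ∨ freeF n G
    | .ex F => freeF (n + 1) F
    | .all F => freeF (n + 1) F
end

mutual
  /-- Number of occurrences of quantifiers (∃ and ∀, but not ε) in a term. -/
  def qcT : Tm → ℕ
    | .var _ => 0
    | .fn _ _ a => ∑ i, qcT (a i)
    | .eps F => qcF F
  /-- Number of occurrences of quantifiers (∃ and ∀, but not ε) in a formula. -/
  def qcF : Fm → ℕ
    | .pred _ _ a => ∑ i, qcT (a i)
    | .not F => qcF F
    | .or F G => qcF F + qcF G
    | .and F G => qcF F + qcF G
    | .imp F G => qcF F + qcF G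
    | .ex F => qcF F + 1
    | .all F => qcF F + 1
end

/-- Quantifier symbols. -/
inductive Quant : Type
  | ex
  | all

/-- `mkQ Q A` is the quantified formula `Qx. A`. -/
def mkQ : Quant → Fm → Fm
  | .ex, A => .ex A
  | .all, A => .all A

/-- `negQ Q A` is `¬^Q A`: `¬A` for `Q = ∀` and `A` for `Q = ∃`. -/
def negQ : Quant → Fm → Fm
  | .ex, A => A
  | .all, A => .not A

/-- `qeRedex Q A` is `A{x ↦ εx. ¬^Q A}`, the contractum of the redex `Qx. A`. -/
def qeRedex (Q : Quant) (A : Fm) : Fm := inst1 A (.eps (negQ Q A))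

mutual
  /-- One rewrite step inside a term, where each rewritten quantified subformula
  `Qx. A` is required to satisfy the side condition `P A`. -/
  inductive StepT (P : Fm → Prop) : Tm → Tm → Prop
    | fn {f k} {a : Fin k → Tm} {j : Fin k} {t' : Tm} :
        StepT P (a j) t' → StepT P (.fn f k a) (.fn f k (Function.update a j t'))
    | eps {F F'} : StepF P F F' → StepT P (.eps F) (.eps F')
  /-- One rewrite step on formulas: replace one occurrence of a subformula
  `Qx. A` (with `P A`) by `A{x ↦ εx. ¬^Q A}`. -/
  inductive StepF (P : Fm → Prop) : Fm → Fm → Prop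
    | root {Q A} : P A → StepF P (mkQ Q A) (qeRedex Q A)
    | pred {p k} {a : Fin k → Tm} {j : Fin k} {t' : Tm} :
        StepT P (a j) t' → StepF P (.pred p k a) (.pred p k (Function.update a j t'))
    | not {F F'} : StepF P F F' → StepF P (.not F) (.not F')
    | orL {F F' G} : StepF P F F' → StepF P (.or F G) (.or F' G)
    | orR {F G G'} : StepF P G G' → StepF P (.or F G) (.or F G')
    | andL {F F' G} : StepF P F F' → StepF P (.and F G) (.and F' G)
    | andR {F G G'} : StepF P G G' → StepF P (.and F G) (.and F G')
    | impL {F F' G} : StepF P F F' → StepF P (.imp F G) (.imp F' G)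
    | impR {F G G'} : StepF P G G' → StepF P (.imp F G) (.imp F G')
    | ex {F F'} : StepF P F F' → StepF P (.ex F) (.ex F')
    | all {F F'} : StepF P F F' → StepF P (.all F) (.all F')
end

/-- The quantifier-elimination rewrite relation `→` on formulas. -/
def Step : Fm → Fm → Prop := StepF (fun _ => True)

/-- `→₀`: the steps rewriting a vacuous quantifier (bound variable not free in the body). -/
def Step0 : Fm → Fm → Prop := StepF (fun A => ¬ freeF 0 A)

/-- `→₁`: the steps rewriting a non-vacuous quantifier. -/
def Step1 : Fm → Fm → Prop := StepF (fun A => freeF 0 A)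

/-- `→ℐ`: the innermost steps, whose rewritten subformula `Qx. A` contains no
quantifier other than the outermost `Q`. -/
def StepI : Fm → Fm → Prop := StepF (fun A => qcF A = 0)


/-! ### Auxiliary development -/

theorem upRen_comp (r s : ℕ → ℕ) : (fun n => upRen r (upRen s n)) = upRen (fun n => r (s n)) := by
  funext n; cases n <;> simp [upRen]

mutual
theorem renren (r s : ℕ → ℕ) : ∀ t : Tm, renT r (renT s t) = renT (fun n => r (s n)) t
  | .var i => rfl
  | .fn f k a => by simp only [renT]; exact congrArg _ (funext fun i => renren r s (a i))
  | .eps F => by simp only [renT]; rw [renrenF (upRen r) (upRen s) F, upRen_comp]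
theorem renrenF (r s : ℕ → ℕ) : ∀ F : Fm, renF r (renF s F) = renF (fun n => r (s n)) F
  | .pred p k a => by simp only [renF]; exact congrArg _ (funext fun i => renren r s (a i))
  | .not F => by simp only [renF, renrenF r s F]
  | .or F G => by simp only [renF, renrenF r s F, renrenF r s G]
  | .and F G => by simp only [renF, renrenF r s F, renrenF r s G]
  | .imp F G => by simp only [renF, renrenF r s F, renrenF r s G]
  | .ex F => by simp only [renF]; rw [renrenF (upRen r) (upRen s) F, upRen_comp]
  | .all F => by simp only [renF]; rw [renrenF (upRen r) (upRen s) F, upRen_comp]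
end

theorem upSub_ren (σ : ℕ → Tm) (r : ℕ → ℕ) :
    (fun n => upSub σ (upRen r n)) = upSub (fun n => σ (r n)) := by
  funext n; cases n <;> simp [upSub, upRen]

mutual
theorem subren (σ : ℕ → Tm) (r : ℕ → ℕ) :
    ∀ t : Tm, subT σ (renT r t) = subT (fun n => σ (r n)) t
  | .var i => rfl
  | .fn f k a => by simp only [renT, subT]; exact congrArg _ (funext fun i => subren σ r (a i))
  | .eps F => by simp only [renT, subT]; rw [subrenF (upSub σ) (upRen r) F, upSub_ren]
theorem subrenF (σ : ℕ → Tm) (r : ℕ → ℕ) :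
    ∀ F : Fm, subF σ (renF r F) = subF (fun n => σ (r n)) F
  | .pred p k a => by simp only [renF, subF]; exact congrArg _ (funext fun i => subren σ r (a i))
  | .not F => by simp only [renF, subF, subrenF σ r F]
  | .or F G => by simp only [renF, subF, subrenF σ r F, subrenF σ r G]
  | .and F G => by simp only [renF, subF, subrenF σ r F, subrenF σ r G]
  | .imp F G => by simp only [renF, subF, subrenF σ r F, subrenF σ r G]
  | .ex F => by simp only [renF, subF]; rw [subrenF (upSub σ) (upRen r) F, upSub_ren]
  | .all F => by simp only [renF, subF]; rw [subrenF (upSub σ) (upRen r) F, upSub_ren]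
end

theorem ren_upSub (r : ℕ → ℕ) (σ : ℕ → Tm) :
    (fun n => renT (upRen r) (upSub σ n)) = upSub (fun n => renT r (σ n)) := by
  funext n; cases n with
  | zero => simp [upSub, renT, upRen]
  | succ n => simp only [upSub, renren]; congr 1

mutual
theorem rensub (r : ℕ → ℕ) (σ : ℕ → Tm) :
    ∀ t : Tm, renT r (subT σ t) = subT (fun n => renT r (σ n)) t
  | .var i => rfl
  | .fn f k a => by simp only [subT, renT]; exact congrArg _ (funext fun i => rensub r σ (a i))
  | .eps F => by simp only [subT, renT]; rw [rensubF (upRen r) (upSub σ) F, ren_upSub]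
theorem rensubF (r : ℕ → ℕ) (σ : ℕ → Tm) :
    ∀ F : Fm, renF r (subF σ F) = subF (fun n => renT r (σ n)) F
  | .pred p k a => by simp only [subF, renF]; exact congrArg _ (funext fun i => rensub r σ (a i))
  | .not F => by simp only [subF, renF, rensubF r σ F]
  | .or F G => by simp only [subF, renF, rensubF r σ F, rensubF r σ G]
  | .and F G => by simp only [subF, renF, rensubF r σ F, rensubF r σ G]
  | .imp F G => by simp only [subF, renF, rensubF r σ F, rensubF r σ G]
  | .ex F => by simp only [subF, renF]; rw [rensubF (upRen r) (upSub σ) F, ren_upSub]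
  | .all F => by simp only [subF, renF]; rw [rensubF (upRen r) (upSub σ) F, ren_upSub]
end

theorem upSub_comp (τ σ : ℕ → Tm) :
    (fun n => subT (upSub τ) (upSub σ n)) = upSub (fun n => subT τ (σ n)) := by
  funext n; cases n with
  | zero => simp [upSub, subT]
  | succ n =>
    show subT (upSub τ) (renT Nat.succ (σ n)) = renT Nat.succ (subT τ (σ n))
    rw [subren, rensub]; congr 1

mutual
theorem subsub (τ σ : ℕ → Tm) :
    ∀ t : Tm, subT τ (subT σ t) = subT (fun n => subT τ (σ n)) t
  | .var i => rfl
  | .fn f k a => by simp only [subT]; exact congrArg _ (funext fun i => subsub τ σ (a i))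
  | .eps F => by simp only [subT]; rw [subsubF (upSub τ) (upSub σ) F, upSub_comp]
theorem subsubF (τ σ : ℕ → Tm) :
    ∀ F : Fm, subF τ (subF σ F) = subF (fun n => subT τ (σ n)) F
  | .pred p k a => by simp only [subF]; exact congrArg _ (funext fun i => subsub τ σ (a i))
  | .not F => by simp only [subF, subsubF τ σ F]
  | .or F G => by simp only [subF, subsubF τ σ F, subsubF τ σ G]
  | .and F G => by simp only [subF, subsubF τ σ F, subsubF τ σ G]
  | .imp F G => by simp only [subF, subsubF τ σ F, subsubF τ σ G]
  | .ex F => by simp only [subF]; rw [subsubF (upSub τ) (upSub σ) F, upSub_comp]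
  | .all F => by simp only [subF]; rw [subsubF (upSub τ) (upSub σ) F, upSub_comp]
end

theorem upSub_var : upSub Tm.var = Tm.var := by
  funext n; cases n <;> simp [upSub, renT]

mutual
theorem sub_id : ∀ t : Tm, subT Tm.var t = t
  | .var i => rfl
  | .fn f k a => by simp only [subT]; exact congrArg _ (funext fun i => sub_id (a i))
  | .eps F => by simp only [subT]; rw [upSub_var, sub_idF F]
theorem sub_idF : ∀ F : Fm, subF Tm.var F = F
  | .pred p k a => by simp only [subF]; exact congrArg _ (funext fun i => sub_id (a i))
  | .not F => by simp only [subF, sub_idF F]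
  | .or F G => by simp only [subF, sub_idF F, sub_idF G]
  | .and F G => by simp only [subF, sub_idF F, sub_idF G]
  | .imp F G => by simp only [subF, sub_idF F, sub_idF G]
  | .ex F => by simp only [subF]; rw [upSub_var, sub_idF F]
  | .all F => by simp only [subF]; rw [upSub_var, sub_idF F]
end

/-! ### inst1 / qeRedex commutation -/

def s1 (t : Tm) : ℕ → Tm := fun n => match n with | 0 => t | n + 1 => .var n

theorem inst1_def (F : Fm) (t : Tm) : inst1 F t = subF (s1 t) F := rfl

theorem negQ_sub (σ : ℕ → Tm) (Q : Quant) (A : Fm) :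
    subF σ (negQ Q A) = negQ Q (subF σ A) := by cases Q <;> rfl

theorem negQ_ren (r : ℕ → ℕ) (Q : Quant) (A : Fm) :
    renF r (negQ Q A) = negQ Q (renF r A) := by cases Q <;> rfl

theorem mkQ_sub (σ : ℕ → Tm) (Q : Quant) (A : Fm) :
    subF σ (mkQ Q A) = mkQ Q (subF (upSub σ) A) := by cases Q <;> rfl

theorem mkQ_ren (r : ℕ → ℕ) (Q : Quant) (A : Fm) :
    renF r (mkQ Q A) = mkQ Q (renF (upRen r) A) := by cases Q <;> rfl

theorem inst1_sub (τ : ℕ → Tm) (A : Fm) (t : Tm) :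
    subF τ (inst1 A t) = inst1 (subF (upSub τ) A) (subT τ t) := by
  rw [inst1_def, inst1_def, subsubF, subsubF]
  congr 1
  funext n
  cases n with
  | zero => rfl
  | succ n =>
    show τ n = subT (s1 (subT τ t)) (renT Nat.succ (τ n))
    rw [subren]
    conv_lhs => rw [← sub_id (τ n)]
    rfl

theorem qeRedex_sub (τ : ℕ → Tm) (Q : Quant) (A : Fm) :
    subF τ (qeRedex Q A) = qeRedex Q (subF (upSub τ) A) := by
  show subF τ (inst1 A (.eps (negQ Q A))) = _
  rw [inst1_sub]
  simp only [subT, negQ_sub, qeRedex]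

theorem inst1_ren (r : ℕ → ℕ) (A : Fm) (t : Tm) :
    renF r (inst1 A t) = inst1 (renF (upRen r) A) (renT r t) := by
  rw [inst1_def, inst1_def, rensubF, subrenF]
  congr 1
  funext n
  cases n with
  | zero => rfl
  | succ n => rfl

theorem qeRedex_ren (r : ℕ → ℕ) (Q : Quant) (A : Fm) :
    renF r (qeRedex Q A) = qeRedex Q (renF (upRen r) A) := by
  show renF r (inst1 A (.eps (negQ Q A))) = _
  rw [inst1_ren]
  simp only [renT, negQ_ren, qeRedex]

/-! ### Parallel reduction -/

mutual
inductive ParT : Tm → Tm → Prop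
  | var (i : ℕ) : ParT (.var i) (.var i)
  | fn {f k} {a a' : Fin k → Tm} : (∀ i, ParT (a i) (a' i)) → ParT (.fn f k a) (.fn f k a')
  | eps {F F'} : ParF F F' → ParT (.eps F) (.eps F')
inductive ParF : Fm → Fm → Prop
  | root {Q A A'} : ParF A A' → ParF (mkQ Q A) (qeRedex Q A')
  | pred {p k} {a a' : Fin k → Tm} : (∀ i, ParT (a i) (a' i)) → ParF (.pred p k a) (.pred p k a')
  | not {F F'} : ParF F F' → ParF (.not F) (.not F')
  | or {F F' G G'} : ParF F F' → ParF G G' → ParF (.or F G) (.or F' G')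
  | and {F F' G G'} : ParF F F' → ParF G G' → ParF (.and F G) (.and F' G')
  | imp {F F' G G'} : ParF F F' → ParF G G' → ParF (.imp F G) (.imp F' G')
  | ex {F F'} : ParF F F' → ParF (.ex F) (.ex F')
  | all {F F'} : ParF F F' → ParF (.all F) (.all F')
end

mutual
theorem parT_refl : ∀ t : Tm, ParT t t
  | .var i => .var i
  | .fn f k a => .fn (fun i => parT_refl (a i))
  | .eps F => .eps (parF_refl F)
theorem parF_refl : ∀ F : Fm, ParF F F
  | .pred p k a => .pred (fun i => parT_refl (a i))
  | .not F => .not (parF_refl F)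
  | .or F G => .or (parF_refl F) (parF_refl G)
  | .and F G => .and (parF_refl F) (parF_refl G)
  | .imp F G => .imp (parF_refl F) (parF_refl G)
  | .ex F => .ex (parF_refl F)
  | .all F => .all (parF_refl F)
end

theorem Par.induction
    {motT : Tm → Tm → Prop} {motF : Fm → Fm → Prop}
    (var : ∀ i, motT (.var i) (.var i))
    (fn : ∀ {f k} {a a' : Fin k → Tm}, (∀ i, ParT (a i) (a' i)) →
      (∀ i, motT (a i) (a' i)) → motT (.fn f k a) (.fn f k a'))
    (eps : ∀ {F F'}, ParF F F' → motF F F' → motT (.eps F) (.eps F'))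
    (root : ∀ {Q A A'}, ParF A A' → motF A A' → motF (mkQ Q A) (qeRedex Q A'))
    (pred : ∀ {p k} {a a' : Fin k → Tm}, (∀ i, ParT (a i) (a' i)) →
      (∀ i, motT (a i) (a' i)) → motF (.pred p k a) (.pred p k a'))
    (not : ∀ {F F'}, ParF F F' → motF F F' → motF (.not F) (.not F'))
    (or : ∀ {F F' G G'}, ParF F F' → ParF G G' → motF F F' → motF G G' → motF (.or F G) (.or F' G'))
    (and : ∀ {F F' G G'}, ParF F F' → ParF G G' → motF F F' → motF G G' → motF (.and F G) (.and F' G'))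
    (imp : ∀ {F F' G G'}, ParF F F' → ParF G G' → motF F F' → motF G G' → motF (.imp F G) (.imp F' G'))
    (ex : ∀ {F F'}, ParF F F' → motF F F' → motF (.ex F) (.ex F'))
    (all : ∀ {F F'}, ParF F F' → motF F F' → motF (.all F) (.all F')) :
    (∀ {t t'}, ParT t t' → motT t t') ∧ (∀ {F F'}, ParF F F' → motF F F') :=
  ⟨fun h => ParT.rec (motive_1 := fun t t' _ => motT t t') (motive_2 := fun F F' _ => motF F F')
      var fn eps root pred not or and imp ex all h,
   fun h => ParF.rec (motive_1 := fun t t' _ => motT t t') (motive_2 := fun F F' _ => motF F F')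
      var fn eps root pred not or and imp ex all h⟩

theorem par_ren :
    (∀ {t t'}, ParT t t' → ∀ r, ParT (renT r t) (renT r t')) ∧
    (∀ {F F'}, ParF F F' → ∀ r, ParF (renF r F) (renF r F')) := by
  apply Par.induction
  case var => exact fun i r => .var _
  case fn => exact fun _ ih r => .fn (fun i => ih i r)
  case eps => exact fun _ ih r => .eps (ih (upRen r))
  case root =>
    intro Q A A' _ ih r
    rw [mkQ_ren, qeRedex_ren]
    exact .root (ih (upRen r))
  case pred => exact fun _ ih r => .pred (fun i => ih i r)
  case not => exact fun _ ih r => .not (ih r)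
  case or => exact fun _ _ ih ih' r => .or (ih r) (ih' r)
  case and => exact fun _ _ ih ih' r => .and (ih r) (ih' r)
  case imp => exact fun _ _ ih ih' r => .imp (ih r) (ih' r)
  case ex => exact fun _ ih r => .ex (ih (upRen r))
  case all => exact fun _ ih r => .all (ih (upRen r))

theorem parT_ren {t t'} (h : ParT t t') (r : ℕ → ℕ) : ParT (renT r t) (renT r t') :=
  par_ren.1 h r
theorem parF_ren {F F'} (h : ParF F F') (r : ℕ → ℕ) : ParF (renF r F) (renF r F') :=
  par_ren.2 h r

theorem par_upSub {σ τ : ℕ → Tm} (h : ∀ n, ParT (σ n) (τ n)) :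
    ∀ n, ParT (upSub σ n) (upSub τ n) := by
  intro n
  cases n with
  | zero => exact .var 0
  | succ n => exact parT_ren (h n) Nat.succ

theorem par_sub :
    (∀ {t t'}, ParT t t' → ∀ {σ τ : ℕ → Tm}, (∀ n, ParT (σ n) (τ n)) →
      ParT (subT σ t) (subT τ t')) ∧
    (∀ {F F'}, ParF F F' → ∀ {σ τ : ℕ → Tm}, (∀ n, ParT (σ n) (τ n)) →
      ParF (subF σ F) (subF τ F')) := by
  apply Par.induction
  case var => exact fun i _ _ hs => hs i
  case fn => exact fun _ ih _ _ hs => .fn (fun i => ih i hs)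
  case eps => exact fun _ ih _ _ hs => .eps (ih (par_upSub hs))
  case root =>
    intro Q A A' _ ih σ τ hs
    rw [mkQ_sub, qeRedex_sub]
    exact .root (ih (par_upSub hs))
  case pred => exact fun _ ih _ _ hs => .pred (fun i => ih i hs)
  case not => exact fun _ ih _ _ hs => .not (ih hs)
  case or => exact fun _ _ ih ih' _ _ hs => .or (ih hs) (ih' hs)
  case and => exact fun _ _ ih ih' _ _ hs => .and (ih hs) (ih' hs)
  case imp => exact fun _ _ ih ih' _ _ hs => .imp (ih hs) (ih' hs)
  case ex => exact fun _ ih _ _ hs => .ex (ih (par_upSub hs))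
  case all => exact fun _ ih _ _ hs => .all (ih (par_upSub hs))

theorem parF_sub {F F'} (h : ParF F F') {σ τ : ℕ → Tm} (hs : ∀ n, ParT (σ n) (τ n)) :
    ParF (subF σ F) (subF τ F') := par_sub.2 h hs

/-! ### The normalization function -/

mutual
def nfT : Tm → Tm
  | .var i => .var i
  | .fn f k a => .fn f k (fun i => nfT (a i))
  | .eps F => .eps (nfF F)
def nfF : Fm → Fm
  | .pred p k a => .pred p k (fun i => nfT (a i))
  | .not F => .not (nfF F)
  | .or F G => .or (nfF F) (nfF G)
  | .and F G => .and (nfF F) (nfF G)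
  | .imp F G => .imp (nfF F) (nfF G)
  | .ex F => qeRedex .ex (nfF F)
  | .all F => qeRedex .all (nfF F)
end

theorem par_negQ {A B : Fm} (Q : Quant) (h : ParF A B) : ParF (negQ Q A) (negQ Q B) := by
  cases Q
  · exact h
  · exact .not h

theorem par_s1 {t t' : Tm} (h : ParT t t') : ∀ n, ParT (s1 t n) (s1 t' n) := by
  intro n; cases n
  · exact h
  · exact .var _

theorem par_qeRedex {A B : Fm} (Q : Quant) (h : ParF A B) : ParF (qeRedex Q A) (qeRedex Q B) := by
  rw [qeRedex, qeRedex, inst1_def, inst1_def]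
  exact parF_sub h (par_s1 (.eps (par_negQ Q h)))

/-- The triangle property. -/
theorem par_tri :
    (∀ {t t'}, ParT t t' → ParT t' (nfT t)) ∧
    (∀ {F F'}, ParF F F' → ParF F' (nfF F)) := by
  apply Par.induction
  case var => exact fun i => .var i
  case fn => exact fun _ ih => .fn ih
  case eps => exact fun _ ih => .eps ih
  case root =>
    intro Q A A' _ ih
    have : nfF (mkQ Q A) = qeRedex Q (nfF A) := by cases Q <;> rfl
    rw [this]
    rw [qeRedex, qeRedex, inst1_def, inst1_def]
    exact parF_sub ih (par_s1 (.eps (par_negQ Q ih)))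
  case pred => exact fun _ ih => .pred ih
  case not => exact fun _ ih => .not ih
  case or => exact fun _ _ ih ih' => .or ih ih'
  case and => exact fun _ _ ih ih' => .and ih ih'
  case imp => exact fun _ _ ih ih' => .imp ih ih'
  case ex => exact fun {F F'} _ ih => ParF.root (Q := .ex) ih
  case all => exact fun {F F'} _ ih => ParF.root (Q := .all) ih

theorem parF_nf (F : Fm) : ParF F (nfF F) := par_tri.2 (parF_refl F)

/-! ### Quantifier counting -/

mutual
theorem qcT_ren (r : ℕ → ℕ) : ∀ t : Tm, qcT (renT r t) = qcT t
  | .var i => rfl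
  | .fn f k a => by simp only [renT, qcT]; exact Finset.sum_congr rfl fun i _ => qcT_ren _ (a i)
  | .eps F => qcF_ren (upRen r) F
theorem qcF_ren (r : ℕ → ℕ) : ∀ F : Fm, qcF (renF r F) = qcF F
  | .pred p k a => by simp only [renF, qcF]; exact Finset.sum_congr rfl fun i _ => qcT_ren _ (a i)
  | .not F => qcF_ren r F
  | .or F A => by simp only [renF, qcF, qcF_ren r F, qcF_ren r A]
  | .and F A => by simp only [renF, qcF, qcF_ren r F, qcF_ren r A]
  | .imp F A => by simp only [renF, qcF, qcF_ren r F, qcF_ren r A]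
  | .ex F => by simp only [renF, qcF, qcF_ren (upRen r) F]
  | .all F => by simp only [renF, qcF, qcF_ren (upRen r) F]
end

theorem qc_upSub {σ : ℕ → Tm} (h : ∀ n, qcT (σ n) = 0) : ∀ n, qcT (upSub σ n) = 0 := by
  intro n; cases n with
  | zero => rfl
  | succ n => rw [upSub, qcT_ren]; exact h n

mutual
theorem qcT_sub (σ : ℕ → Tm) (hσ : ∀ n, qcT (σ n) = 0) :
    ∀ t : Tm, qcT t = 0 → qcT (subT σ t) = 0
  | .var i, _ => hσ i
  | .fn f k a, h => by
    simp only [qcT, subT, Finset.sum_eq_zero_iff, Finset.mem_univ, forall_true_left] at h ⊢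
    exact fun i => qcT_sub σ hσ (a i) (h i)
  | .eps F, h => qcF_sub (upSub σ) (qc_upSub hσ) F h
theorem qcF_sub (σ : ℕ → Tm) (hσ : ∀ n, qcT (σ n) = 0) :
    ∀ F : Fm, qcF F = 0 → qcF (subF σ F) = 0
  | .pred p k a, h => by
    simp only [qcF, subF, Finset.sum_eq_zero_iff, Finset.mem_univ, forall_true_left] at h ⊢
    exact fun i => qcT_sub σ hσ (a i) (h i)
  | .not F, h => qcF_sub σ hσ F h
  | .or F G, h => by
    simp only [qcF, subF, Nat.add_eq_zero] at h ⊢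
    exact ⟨qcF_sub σ hσ F h.1, qcF_sub σ hσ G h.2⟩
  | .and F G, h => by
    simp only [qcF, subF, Nat.add_eq_zero] at h ⊢
    exact ⟨qcF_sub σ hσ F h.1, qcF_sub σ hσ G h.2⟩
  | .imp F G, h => by
    simp only [qcF, subF, Nat.add_eq_zero] at h ⊢
    exact ⟨qcF_sub σ hσ F h.1, qcF_sub σ hσ G h.2⟩
  | .ex F, h => by simp [qcF] at h
  | .all F, h => by simp [qcF] at h
end

theorem qc_negQ (Q : Quant) (A : Fm) : qcF (negQ Q A) = qcF A := by cases Q <;> rfl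

theorem qc_qeRedex {A : Fm} (Q : Quant) (h : qcF A = 0) : qcF (qeRedex Q A) = 0 := by
  rw [qeRedex, inst1_def]
  apply qcF_sub _ _ _ h
  intro n; cases n with
  | zero => show qcF (negQ Q A) = 0; rw [qc_negQ]; exact h
  | succ n => rfl

mutual
theorem qc_nfT : ∀ t : Tm, qcT (nfT t) = 0
  | .var i => rfl
  | .fn f k a => by
    simp only [nfT, qcT, Finset.sum_eq_zero_iff, Finset.mem_univ, forall_true_left]
    exact fun i => qc_nfT (a i)
  | .eps F => qc_nfF F
theorem qc_nfF : ∀ F : Fm, qcF (nfF F) = 0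
  | .pred p k a => by
    simp only [nfF, qcF, Finset.sum_eq_zero_iff, Finset.mem_univ, forall_true_left]
    exact fun i => qc_nfT (a i)
  | .not F => qc_nfF F
  | .or F G => by simp only [nfF, qcF, qc_nfF F, qc_nfF G]
  | .and F G => by simp only [nfF, qcF, qc_nfF F, qc_nfF G]
  | .imp F G => by simp only [nfF, qcF, qc_nfF F, qc_nfF G]
  | .ex F => qc_qeRedex .ex (qc_nfF F)
  | .all F => qc_qeRedex .all (qc_nfF F)
end

/-! ### Single steps vs parallel steps -/

theorem Step.induction {P : Fm → Prop}
    {motT : Tm → Tm → Prop} {motF : Fm → Fm → Prop}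
    (fn : ∀ {f k} {a : Fin k → Tm} {j t'}, StepT P (a j) t' → motT (a j) t' →
      motT (.fn f k a) (.fn f k (Function.update a j t')))
    (eps : ∀ {F F'}, StepF P F F' → motF F F' → motT (.eps F) (.eps F'))
    (root : ∀ {Q A}, P A → motF (mkQ Q A) (qeRedex Q A))
    (pred : ∀ {p k} {a : Fin k → Tm} {j t'}, StepT P (a j) t' → motT (a j) t' →
      motF (.pred p k a) (.pred p k (Function.update a j t')))
    (not : ∀ {F F'}, StepF P F F' → motF F F' → motF (.not F) (.not F'))
    (orL : ∀ {F F' G}, StepF P F F' → motF F F' → motF (.or F G) (.or F' G))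
    (orR : ∀ {F G G'}, StepF P G G' → motF G G' → motF (.or F G) (.or F G'))
    (andL : ∀ {F F' G}, StepF P F F' → motF F F' → motF (.and F G) (.and F' G))
    (andR : ∀ {F G G'}, StepF P G G' → motF G G' → motF (.and F G) (.and F G'))
    (impL : ∀ {F F' G}, StepF P F F' → motF F F' → motF (.imp F G) (.imp F' G))
    (impR : ∀ {F G G'}, StepF P G G' → motF G G' → motF (.imp F G) (.imp F G'))
    (ex : ∀ {F F'}, StepF P F F' → motF F F' → motF (.ex F) (.ex F'))
    (all : ∀ {F F'}, StepF P F F' → motF F F' → motF (.all F) (.all F')) :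
    (∀ {t t'}, StepT P t t' → motT t t') ∧ (∀ {F F'}, StepF P F F' → motF F F') :=
  ⟨fun h => StepT.rec (motive_1 := fun t t' _ => motT t t') (motive_2 := fun F F' _ => motF F F')
      (fun h ih => fn h ih) (fun h ih => eps h ih) (fun h => root h) (fun h ih => pred h ih)
      (fun h ih => not h ih) (fun h ih => orL h ih) (fun h ih => orR h ih)
      (fun h ih => andL h ih) (fun h ih => andR h ih) (fun h ih => impL h ih)
      (fun h ih => impR h ih) (fun h ih => ex h ih) (fun h ih => all h ih) h,
   fun h => StepF.rec (motive_1 := fun t t' _ => motT t t') (motive_2 := fun F F' _ => motF F F')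
      (fun h ih => fn h ih) (fun h ih => eps h ih) (fun h => root h) (fun h ih => pred h ih)
      (fun h ih => not h ih) (fun h ih => orL h ih) (fun h ih => orR h ih)
      (fun h ih => andL h ih) (fun h ih => andR h ih) (fun h ih => impL h ih)
      (fun h ih => impR h ih) (fun h ih => ex h ih) (fun h ih => all h ih) h⟩

/-- A formula admitting a step contains a quantifier. -/
theorem step_qc {P : Fm → Prop} :
    (∀ {t t' : Tm}, StepT P t t' → qcT t ≠ 0) ∧ (∀ {F F' : Fm}, StepF P F F' → qcF F ≠ 0) := by
  apply Step.induction
  case fn =>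
    intro f k a j t' _ ih h
    simp only [qcT, Finset.sum_eq_zero_iff, Finset.mem_univ, forall_true_left] at h
    exact ih (h j)
  case eps => exact fun _ ih => ih
  case root =>
    intro Q A _
    cases Q <;> simp [mkQ, qcF]
  case pred =>
    intro p k a j t' _ ih h
    simp only [qcF, Finset.sum_eq_zero_iff, Finset.mem_univ, forall_true_left] at h
    exact ih (h j)
  case not => exact fun _ ih => ih
  case orL => intro F F' G _ ih h; simp only [qcF, Nat.add_eq_zero] at h; exact ih h.1
  case orR => intro F G G' _ ih h; simp only [qcF, Nat.add_eq_zero] at h; exact ih h.2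
  case andL => intro F F' G _ ih h; simp only [qcF, Nat.add_eq_zero] at h; exact ih h.1
  case andR => intro F G G' _ ih h; simp only [qcF, Nat.add_eq_zero] at h; exact ih h.2
  case impL => intro F F' G _ ih h; simp only [qcF, Nat.add_eq_zero] at h; exact ih h.1
  case impR => intro F G G' _ ih h; simp only [qcF, Nat.add_eq_zero] at h; exact ih h.2
  case ex => intro F F' _ _ h; simp [qcF] at h
  case all => intro F F' _ _ h; simp [qcF] at h

/-- `Step ⊆ Par`. -/
theorem step_par_both :
    (∀ {t t' : Tm}, StepT (fun _ => True) t t' → ParT t t') ∧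
    (∀ {F F' : Fm}, StepF (fun _ => True) F F' → ParF F F') := by
  apply Step.induction
  case fn =>
    intro f k a j t' _ ih
    refine .fn fun i => ?_
    rcases eq_or_ne i j with rfl | hne
    · rw [Function.update_self]; exact ih
    · rw [Function.update_of_ne hne]; exact parT_refl _
  case eps => exact fun _ ih => .eps ih
  case root => exact fun {Q A} _ => .root (parF_refl A)
  case pred =>
    intro p k a j t' _ ih
    refine .pred fun i => ?_
    rcases eq_or_ne i j with rfl | hne
    · rw [Function.update_self]; exact ih
    · rw [Function.update_of_ne hne]; exact parT_refl _
  case not => exact fun _ ih => .not ih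
  case orL => exact fun _ ih => .or ih (parF_refl _)
  case orR => exact fun _ ih => .or (parF_refl _) ih
  case andL => exact fun _ ih => .and ih (parF_refl _)
  case andR => exact fun _ ih => .and (parF_refl _) ih
  case impL => exact fun _ ih => .imp ih (parF_refl _)
  case impR => exact fun _ ih => .imp (parF_refl _) ih
  case ex => exact fun _ ih => .ex ih
  case all => exact fun _ ih => .all ih

theorem step_par {F F' : Fm} (h : Step F F') : ParF F F' := step_par_both.2 h

/-! ### `Par ⊆ Step*` -/

abbrev RT := Relation.ReflTransGen Step
abbrev RTT := Relation.ReflTransGen (StepT (fun _ => True))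

theorem rt_fn_one {f k} {a : Fin k → Tm} {j : Fin k} {t' : Tm} (h : RTT (a j) t') :
    RTT (.fn f k a) (.fn f k (Function.update a j t')) := by
  induction h with
  | refl => rw [Function.update_eq_self]
  | @tail b c _ hbc ih =>
    refine ih.tail ?_
    have : StepT (fun _ => True) (Function.update a j b j) c := by
      rwa [Function.update_self]
    have := StepT.fn (f := f) this
    rwa [Function.update_idem] at this

theorem rt_fn {f k} {a a' : Fin k → Tm} (h : ∀ i, RTT (a i) (a' i)) :
    RTT (.fn f k a) (.fn f k a') := by
  have key : ∀ s : Finset (Fin k),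
      RTT (.fn f k a) (.fn f k (fun i => if i ∈ s then a' i else a i)) := by
    intro s
    induction s using Finset.induction_on with
    | empty => simp only [Finset.notMem_empty, if_false]; exact .refl
    | @insert j s hj ih =>
      have step := rt_fn_one (a := fun i => if i ∈ s then a' i else a i) (j := j)
        (t' := a' j) (f := f) (by simpa [hj] using h j)
      refine ih.trans (step.trans ?_)
      have : Function.update (fun i => if i ∈ s then a' i else a i) j (a' j)
          = fun i => if i ∈ insert j s then a' i else a i := by
        funext i
        rcases eq_or_ne i j with rfl | hne
        · simp [Function.update_self]
        · simp [Function.update_of_ne hne, Finset.mem_insert, hne]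
      rw [this]
  have := key Finset.univ
  simpa using this

theorem rt_pred_one {p k} {a : Fin k → Tm} {j : Fin k} {t' : Tm} (h : RTT (a j) t') :
    RT (.pred p k a) (.pred p k (Function.update a j t')) := by
  induction h with
  | refl => rw [Function.update_eq_self]
  | @tail b c _ hbc ih =>
    refine ih.tail ?_
    have : StepT (fun _ => True) (Function.update a j b j) c := by
      rwa [Function.update_self]
    have := StepF.pred (p := p) this
    rwa [Function.update_idem] at this

theorem rt_pred {p k} {a a' : Fin k → Tm} (h : ∀ i, RTT (a i) (a' i)) :
    RT (.pred p k a) (.pred p k a') := by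
  have key : ∀ s : Finset (Fin k),
      RT (.pred p k a) (.pred p k (fun i => if i ∈ s then a' i else a i)) := by
    intro s
    induction s using Finset.induction_on with
    | empty => simp only [Finset.notMem_empty, if_false]; exact .refl
    | @insert j s hj ih =>
      have step := rt_pred_one (a := fun i => if i ∈ s then a' i else a i) (j := j)
        (t' := a' j) (p := p) (by simpa [hj] using h j)
      refine ih.trans (step.trans ?_)
      have : Function.update (fun i => if i ∈ s then a' i else a i) j (a' j)
          = fun i => if i ∈ insert j s then a' i else a i := by
        funext i
        rcases eq_or_ne i j with rfl | hne
        · simp [Function.update_self]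
        · simp [Function.update_of_ne hne, Finset.mem_insert, hne]
      rw [this]
  have := key Finset.univ
  simpa using this

theorem rt_mkQ {A A' : Fm} (Q : Quant) (h : RT A A') : RT (mkQ Q A) (mkQ Q A') := by
  cases Q
  · exact h.lift Fm.ex fun _ _ => StepF.ex
  · exact h.lift Fm.all fun _ _ => StepF.all

/-- `Par ⊆ Step*`. -/
theorem par_rt :
    (∀ {t t'}, ParT t t' → RTT t t') ∧ (∀ {F F'}, ParF F F' → RT F F') := by
  apply Par.induction
  case var => exact fun _ => .refl
  case fn => exact fun _ ih => rt_fn ih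
  case eps => exact fun _ ih => ih.lift Tm.eps fun _ _ => StepT.eps
  case root =>
    intro Q A A' _ ih
    exact (rt_mkQ Q ih).tail (StepF.root trivial)
  case pred => exact fun _ ih => rt_pred ih
  case not => exact fun _ ih => ih.lift Fm.not fun _ _ => StepF.not
  case or =>
    intro F F' G G' _ _ ih ih'
    exact (ih.lift (Fm.or · G) fun _ _ => StepF.orL).trans
      (ih'.lift (Fm.or F' ·) fun _ _ => StepF.orR)
  case and =>
    intro F F' G G' _ _ ih ih'
    exact (ih.lift (Fm.and · G) fun _ _ => StepF.andL).trans
      (ih'.lift (Fm.and F' ·) fun _ _ => StepF.andR)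
  case imp =>
    intro F F' G G' _ _ ih ih'
    exact (ih.lift (Fm.imp · G) fun _ _ => StepF.impL).trans
      (ih'.lift (Fm.imp F' ·) fun _ _ => StepF.impR)
  case ex => exact fun _ ih => ih.lift Fm.ex fun _ _ => StepF.ex
  case all => exact fun _ ih => ih.lift Fm.all fun _ _ => StepF.all

/-! ### Assembly -/

theorem rt_of_par_rt {F G : Fm} (h : Relation.ReflTransGen ParF F G) : RT F G := by
  induction h with
  | refl => exact .refl
  | tail _ hbc ih => exact ih.trans (par_rt.2 hbc)

theorem normal_rt_eq {F F'' : Fm} (hnorm : ∀ G, ¬ Step F G) (h : RT F F'') : F'' = F := by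
  rcases h.cases_head with rfl | ⟨c, hc, _⟩
  · rfl
  · exact absurd hc (hnorm c)

/-- every formula has exactly one `→`-normal form, and this
normal form contains no quantifier. -/
theorem stmt14 : ∀ F : Fm, ∃ F' : Fm,
    (Relation.ReflTransGen Step F F' ∧ (∀ G : Fm, ¬ Step F' G) ∧ qcF F' = 0) ∧
    ∀ F'' : Fm, Relation.ReflTransGen Step F F'' → (∀ G : Fm, ¬ Step F'' G) →
      F'' = F' := by
  intro F
  have nf_normal : ∀ G : Fm, ¬ Step (nfF F) G := fun G h => step_qc.2 h (qc_nfF F)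
  refine ⟨nfF F, ⟨par_rt.2 (parF_nf F), nf_normal, qc_nfF F⟩, ?_⟩
  intro F'' hFF'' hnorm
  have h1 : Relation.ReflTransGen ParF F F'' := hFF''.lift id (fun _ _ h => step_par h)
  have h2 : Relation.ReflTransGen ParF F (nfF F) := .single (parF_nf F)
  have diamond : ∀ a b c : Fm, ParF a b → ParF a c →
      ∃ d, Relation.ReflGen ParF b d ∧ Relation.ReflTransGen ParF c d :=
    fun a b c hb hc => ⟨nfF a, .single (par_tri.2 hb), .single (par_tri.2 hc)⟩
  obtain ⟨d, hd1, hd2⟩ := Relation.church_rosser diamond h1 h2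
  have e1 : d = F'' := normal_rt_eq hnorm (rt_of_par_rt hd1)
  have e2 : d = nfF F := normal_rt_eq nf_normal (rt_of_par_rt hd2)
  rw [← e1, e2]
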